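/- Let g be a real Lie algebra with a hypercomplex structure (I,J,K) and Obata connection ∇, and let α ∈ g* be a nonzero ∇-parallel 1-form. Set Σ_α := ker α ∩ ker(α∘I) ∩ ker(α∘J) ∩ ker(α∘K). Then Σ_α is a Lie ideal of g, is invariant under I, J, and K, contains H[g,g], and is a proper subspace of g. -/
import Mathlib


open Submodule

section Hyper

variable {L : Type*} [LieRing L] [LieAlgebra ℝ L]

/-- A complex structure operator on a real Lie algebra: `I² = -id` and the integrability
identity `[IX,IY] = [X,Y] + I[IX,Y] + I[X,IY]` (equivalent to `g^{1,0}` being a subalgebra). -/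
def IsComplexStructureOp (I : L →ₗ[ℝ] L) : Prop :=
  (∀ x, I (I x) = -x) ∧ ∀ x y : L, ⁅I x, I y⁆ = ⁅x, y⁆ + I ⁅I x, y⁆ + I ⁅x, I y⁆

/-- A hypercomplex structure: a triple of complex structure operators with `IJ = K`
(together with `I² = J² = K² = -id` this gives the quaternionic relations). -/
structure IsHypercomplex (I J K : L →ₗ[ℝ] L) : Prop where
  hI : IsComplexStructureOp I
  hJ : IsComplexStructureOp J
  hK : IsComplexStructureOp K
  hIJ : ∀ x, I (J x) = K x

/-- The Obata connection `∇_X` as an endomorphism of `L`: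
`∇_X Y = ½([X,Y] + I[IX,Y] − J[X,JY] + K[IX,JY])`. -/
noncomputable def obataOp (I J K : L →ₗ[ℝ] L) (X : L) : Module.End ℝ L :=
  (1/2 : ℝ) • (LieAlgebra.ad ℝ L X + I ∘ₗ LieAlgebra.ad ℝ L (I X)
    - J ∘ₗ LieAlgebra.ad ℝ L X ∘ₗ J + K ∘ₗ LieAlgebra.ad ℝ L (I X) ∘ₗ J)

/-- Flatness of the Obata connection. -/
def ObataFlat (I J K : L →ₗ[ℝ] L) : Prop :=
  ∀ X Y Z : L, obataOp I J K X (obataOp I J K Y Z) - obataOp I J K Y (obataOp I J K X Z)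
    = obataOp I J K ⁅X, Y⁆ Z

/-- The set of brackets of elements of a subspace `W`. -/
def bracketSet (W : Submodule ℝ L) : Set L := {z : L | ∃ x ∈ W, ∃ y ∈ W, z = ⁅x, y⁆}

/-- `H[W,W] = span([W,W] ∪ I[W,W] ∪ J[W,W] ∪ K[W,W])`. -/
def Hbr (I J K : L →ₗ[ℝ] L) (W : Submodule ℝ L) : Submodule ℝ L :=
  span ℝ (bracketSet W ∪ I '' bracketSet W ∪ J '' bracketSet W ∪ K '' bracketSet W)

/-- The descending series `g_0^H = g`, `g_i^H = H[g_{i-1}^H, g_{i-1}^H]`. -/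
def gH (I J K : L →ₗ[ℝ] L) : ℕ → Submodule ℝ L
  | 0 => ⊤
  | i + 1 => Hbr I J K (gH I J K i)

end Hyper


section SigmaAux

variable {L : Type*} [LieRing L] [LieAlgebra ℝ L] {I J K : L →ₗ[ℝ] L}

private lemma myJIJ (h : IsHypercomplex I J K) (x : L) : J (I (J x)) = I x := by
  have e : I (J (I (J x))) = -x := by rw [h.hIJ, h.hIJ]; exact h.hK.1 x
  have e2 := congrArg I e
  rw [h.hI.1, map_neg] at e2
  exact neg_injective e2

private lemma myJI (h : IsHypercomplex I J K) (x : L) : J (I x) = -K x := by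
  have e := myJIJ h (-(J x))
  simp only [map_neg, h.hJ.1, neg_neg, h.hIJ] at e
  exact e

private lemma myKI (h : IsHypercomplex I J K) (x : L) : K (I x) = J x := by
  rw [← h.hIJ, myJI h, map_neg, ← h.hIJ, h.hI.1, neg_neg]

private lemma myIK (h : IsHypercomplex I J K) (x : L) : I (K x) = -J x := by
  rw [← h.hIJ, h.hI.1]

private lemma myJK (h : IsHypercomplex I J K) (x : L) : J (K x) = I x := by
  rw [← h.hIJ]; exact myJIJ h x

private lemma myKJ (h : IsHypercomplex I J K) (x : L) : K (J x) = -I x := by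
  rw [← h.hIJ, h.hJ.1, map_neg]

private lemma myObA (I J K : L →ₗ[ℝ] L) (X Y : L) :
    obataOp I J K X Y
      = (1/2 : ℝ) • (⁅X, Y⁆ + I ⁅I X, Y⁆ - J ⁅X, J Y⁆ + K ⁅I X, J Y⁆) := by
  simp only [obataOp, LinearMap.smul_apply, LinearMap.add_apply, LinearMap.sub_apply,
    LinearMap.coe_comp, Function.comp_apply, LieAlgebra.ad_apply]

private lemma myTorsion (h : IsHypercomplex I J K) (X Y : L) :
    obataOp I J K X Y - obataOp I J K Y X = ⁅X, Y⁆ := by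
  have sk0 : ∀ u v : L, ⁅u, v⁆ = -⁅v, u⁆ := fun u v => by rw [← lie_skew]
  have skI : ∀ u v : L, I ⁅u, v⁆ = -I ⁅v, u⁆ := fun u v => by rw [sk0 u v, map_neg]
  have skJ : ∀ u v : L, J ⁅u, v⁆ = -J ⁅v, u⁆ := fun u v => by rw [sk0 u v, map_neg]
  have skK : ∀ u v : L, K ⁅u, v⁆ = -K ⁅v, u⁆ := fun u v => by rw [sk0 u v, map_neg]
  have cb := h.hJ.2 X Y
  have cd := h.hK.2 X Y
  have ce := h.hI.2 (J X) (J Y)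
  simp only [h.hIJ] at ce
  have cc := congrArg I (h.hJ.2 (I X) Y)
  simp only [myJI h, neg_lie, map_neg, map_add, h.hIJ] at cc
  have ccp := congrArg I (h.hJ.2 (I Y) X)
  simp only [myJI h, neg_lie, map_neg, map_add, h.hIJ] at ccp
  rw [myObA, myObA]
  linear_combination (norm := module) (1/2 : ℝ) • cb - (1/2 : ℝ) • cd + (1/2 : ℝ) • ce
    - (1/2 : ℝ) • cc + (1/2 : ℝ) • ccp - (1/2 : ℝ) • sk0 Y X + (1/2 : ℝ) • skJ Y (J X)
    + (1/2 : ℝ) • skI (K Y) (J X) - (1/2 : ℝ) • skK (K Y) X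

private lemma myParI (h : IsHypercomplex I J K) (X Y : L) :
    obataOp I J K X (I Y) = I (obataOp I J K X Y) := by
  have cf := congrArg I (h.hI.2 X Y)
  simp only [map_add, h.hI.1] at cf
  have cg := congrArg K (h.hI.2 X (J Y))
  simp only [map_add, h.hIJ, myKI h] at cg
  rw [myObA, myObA, map_smul]
  simp only [map_add, map_sub, myJI h, lie_neg, map_neg, h.hIJ, myIK h, h.hI.1]
  linear_combination (norm := module) (1/2 : ℝ) • cf - (1/2 : ℝ) • cg

private lemma myParJ (h : IsHypercomplex I J K) (X Y : L) :
    obataOp I J K X (J Y) = J (obataOp I J K X Y) := by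
  rw [myObA, myObA, map_smul]
  simp only [map_add, map_sub, h.hJ.1, lie_neg, map_neg, myJI h, myJK h]
  module

private lemma myParK (h : IsHypercomplex I J K) (X Y : L) :
    obataOp I J K X (K Y) = K (obataOp I J K X Y) := by
  rw [← h.hIJ Y, myParI h, myParJ h, h.hIJ]

end SigmaAux



/-- for a nonzero Obata-parallel 1-form `α`, the subspace
`Σ_α = ker α ∩ ker(α∘I) ∩ ker(α∘J) ∩ ker(α∘K)` is a Lie ideal, is `I`, `J`, `K`-invariant,
contains `H[g,g]`, and is proper. -/
theorem sigma_alpha_properties {L : Type*} [LieRing L] [LieAlgebra ℝ L]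
    (I J K : L →ₗ[ℝ] L) (h : IsHypercomplex I J K)
    (α : L →ₗ[ℝ] ℝ) (hα : α ≠ 0) (hpar : ∀ X Y : L, α (obataOp I J K X Y) = 0) :
    (∀ (x : L), ∀ y ∈ LinearMap.ker α ⊓ LinearMap.ker (α ∘ₗ I) ⊓ LinearMap.ker (α ∘ₗ J)
        ⊓ LinearMap.ker (α ∘ₗ K),
      ⁅x, y⁆ ∈ LinearMap.ker α ⊓ LinearMap.ker (α ∘ₗ I) ⊓ LinearMap.ker (α ∘ₗ J)
        ⊓ LinearMap.ker (α ∘ₗ K)) ∧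
    (∀ y ∈ LinearMap.ker α ⊓ LinearMap.ker (α ∘ₗ I) ⊓ LinearMap.ker (α ∘ₗ J)
        ⊓ LinearMap.ker (α ∘ₗ K),
      I y ∈ LinearMap.ker α ⊓ LinearMap.ker (α ∘ₗ I) ⊓ LinearMap.ker (α ∘ₗ J)
        ⊓ LinearMap.ker (α ∘ₗ K)) ∧
    (∀ y ∈ LinearMap.ker α ⊓ LinearMap.ker (α ∘ₗ I) ⊓ LinearMap.ker (α ∘ₗ J)
        ⊓ LinearMap.ker (α ∘ₗ K),
      J y ∈ LinearMap.ker α ⊓ LinearMap.ker (α ∘ₗ I) ⊓ LinearMap.ker (α ∘ₗ J)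
        ⊓ LinearMap.ker (α ∘ₗ K)) ∧
    (∀ y ∈ LinearMap.ker α ⊓ LinearMap.ker (α ∘ₗ I) ⊓ LinearMap.ker (α ∘ₗ J)
        ⊓ LinearMap.ker (α ∘ₗ K),
      K y ∈ LinearMap.ker α ⊓ LinearMap.ker (α ∘ₗ I) ⊓ LinearMap.ker (α ∘ₗ J)
        ⊓ LinearMap.ker (α ∘ₗ K)) ∧
    Hbr I J K ⊤ ≤ LinearMap.ker α ⊓ LinearMap.ker (α ∘ₗ I) ⊓ LinearMap.ker (α ∘ₗ J)
        ⊓ LinearMap.ker (α ∘ₗ K) ∧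
    LinearMap.ker α ⊓ LinearMap.ker (α ∘ₗ I) ⊓ LinearMap.ker (α ∘ₗ J)
        ⊓ LinearMap.ker (α ∘ₗ K) < ⊤ := by
  have hbr : ∀ X Y : L, α ⁅X, Y⁆ = 0 := fun X Y => by
    rw [← myTorsion h X Y, map_sub, hpar, hpar, sub_zero]
  have hbrI : ∀ X Y : L, α (I ⁅X, Y⁆) = 0 := fun X Y => by
    have e : obataOp I J K X (I Y) - obataOp I J K Y (I X) = I ⁅X, Y⁆ := by
      rw [myParI h, myParI h, ← map_sub, myTorsion h]
    rw [← e, map_sub, hpar, hpar, sub_zero]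
  have hbrJ : ∀ X Y : L, α (J ⁅X, Y⁆) = 0 := fun X Y => by
    have e : obataOp I J K X (J Y) - obataOp I J K Y (J X) = J ⁅X, Y⁆ := by
      rw [myParJ h, myParJ h, ← map_sub, myTorsion h]
    rw [← e, map_sub, hpar, hpar, sub_zero]
  have hbrK : ∀ X Y : L, α (K ⁅X, Y⁆) = 0 := fun X Y => by
    have e : obataOp I J K X (K Y) - obataOp I J K Y (K X) = K ⁅X, Y⁆ := by
      rw [myParK h, myParK h, ← map_sub, myTorsion h]
    rw [← e, map_sub, hpar, hpar, sub_zero]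
  set Sg := LinearMap.ker α ⊓ LinearMap.ker (α ∘ₗ I) ⊓ LinearMap.ker (α ∘ₗ J)
      ⊓ LinearMap.ker (α ∘ₗ K) with hSg
  have hmem : ∀ z : L, α z = 0 → α (I z) = 0 → α (J z) = 0 → α (K z) = 0 → z ∈ Sg := by
    intro z h1 h2 h3 h4
    simp only [hSg, Submodule.mem_inf, LinearMap.mem_ker, LinearMap.coe_comp,
      Function.comp_apply]
    exact ⟨⟨⟨h1, h2⟩, h3⟩, h4⟩
  have hmem' : ∀ z : L, z ∈ Sg → α z = 0 ∧ α (I z) = 0 ∧ α (J z) = 0 ∧ α (K z) = 0 := by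
    intro z hz
    simp only [hSg, Submodule.mem_inf, LinearMap.mem_ker, LinearMap.coe_comp,
      Function.comp_apply] at hz
    exact ⟨hz.1.1.1, hz.1.1.2, hz.1.2, hz.2⟩
  have memI : ∀ z, z ∈ Sg → I z ∈ Sg := by
    intro z hz
    obtain ⟨h1, h2, h3, h4⟩ := hmem' z hz
    exact hmem _ h2 (by rw [h.hI.1, map_neg, h1, neg_zero])
      (by rw [myJI h, map_neg, h4, neg_zero]) (by rw [myKI h]; exact h3)
  have memJ : ∀ z, z ∈ Sg → J z ∈ Sg := by
    intro z hz
    obtain ⟨h1, h2, h3, h4⟩ := hmem' z hz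
    exact hmem _ h3 (by rw [h.hIJ]; exact h4)
      (by rw [h.hJ.1, map_neg, h1, neg_zero]) (by rw [myKJ h, map_neg, h2, neg_zero])
  have memK : ∀ z, z ∈ Sg → K z ∈ Sg := by
    intro z hz
    obtain ⟨h1, h2, h3, h4⟩ := hmem' z hz
    exact hmem _ h4 (by rw [myIK h, map_neg, h3, neg_zero])
      (by rw [myJK h]; exact h2) (by rw [h.hK.1, map_neg, h1, neg_zero])
  have membr : ∀ X Y : L, ⁅X, Y⁆ ∈ Sg :=
    fun X Y => hmem _ (hbr X Y) (hbrI X Y) (hbrJ X Y) (hbrK X Y)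
  refine ⟨fun x y _ => membr x y, memI, memJ, memK, ?_, ?_⟩
  · unfold Hbr
    apply Submodule.span_le.mpr
    rintro z (((⟨x, -, y, -, rfl⟩ | ⟨w, ⟨x, -, y, -, rfl⟩, rfl⟩) |
      ⟨w, ⟨x, -, y, -, rfl⟩, rfl⟩) | ⟨w, ⟨x, -, y, -, rfl⟩, rfl⟩)
    · exact membr x y
    · exact memI _ (membr x y)
    · exact memJ _ (membr x y)
    · exact memK _ (membr x y)
  · rw [lt_top_iff_ne_top]
    intro hT
    apply hα
    apply LinearMap.ext
    intro z
    have hz : z ∈ Sg := by rw [hT]; exact Submodule.mem_top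
    simpa using (hmem' z hz).1
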